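/- Let {x^k} be generated by Algorithm 1. Then the whole sequence {x^k} is contained in the lower level set {x ∈ s : F(x) ≤ F(x⁰)}. -/

import Mathlib

open scoped RealInnerProductSpace

/-- The Frank–Wolfe gap `G(x) = sup_{v ∈ s} (⟪∇f(x), x − v⟫ + g(x) − g(v))`. -/
noncomputable def FWgap {E : Type*} [NormedAddCommGroup E] [InnerProductSpace ℝ E] [CompleteSpace E]
    (f g : E → ℝ) (s : Set E) (x : E) : ℝ :=
  ⨆ v : s, (⟪gradient f x, x - (v : E)⟫ + g x - g (v : E))


/-- The whole sequence `{x^k}` generated by Algorithm 1 is contained in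
the lower level set `{x ∈ s : F(x) ≤ F(x⁰)}`. -/
theorem alg1_iterates_in_level_set
    {E : Type*} [NormedAddCommGroup E] [InnerProductSpace ℝ E] [FiniteDimensional ℝ E]
    (s : Set E) (hs_ne : s.Nonempty) (hs_cl : IsClosed s) (hs_cv : Convex ℝ s)
    (g : E → ℝ) (hg_cv : ConvexOn ℝ s g) (hg_lsc : LowerSemicontinuousOn g s)
    (hg_sc : ∀ M : ℝ, ∃ R : ℝ, ∀ z ∈ s, R ≤ ‖z‖ → M ≤ g z / ‖z‖)
    (f : E → ℝ) (hf : ∃ u : Set E, IsOpen u ∧ s ⊆ u ∧ ContDiffOn ℝ 1 f u)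
    (hF_bdd : BddBelow ((fun z => f z + g z) '' s))
    (β σ p : ℝ) (hβ : β ∈ Set.Ioo (0 : ℝ) 1) (hσ : σ ∈ Set.Ioo (0 : ℝ) 1)
    (hp : p ∈ Set.Ioc (0 : ℝ) 1)
    (x v d : ℕ → E) (ik : ℕ → ℕ) (Fs ps : ℕ → ℝ)
    (hx0 : x 0 ∈ s)
    (hv : ∀ k, v k ∈ s ∧ ∀ w ∈ s,
      ⟪gradient f (x k), v k⟫ + g (v k) ≤ ⟪gradient f (x k), w⟫ + g w)
    (hd : ∀ k, d k = v k - x k)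
    (hik : ∀ k,
      (f (x k + β ^ ik k • d k) + g (x k + β ^ ik k • d k)
          ≤ Fs k - σ * β ^ ik k * FWgap f g s (x k))
      ∧ ∀ j < ik k,
        ¬ (f (x k + β ^ j • d k) + g (x k + β ^ j • d k)
          ≤ Fs k - σ * β ^ j * FWgap f g s (x k)))
    (hxsucc : ∀ k, x (k + 1) = x k + β ^ ik k • d k)
    (hF0 : Fs 0 = f (x 0) + g (x 0))
    (hps : ∀ k, ps (k + 1) ∈ Set.Icc p 1)
    (hFsucc : ∀ k, Fs (k + 1)
      = ps (k + 1) * (f (x (k + 1)) + g (x (k + 1))) + (1 - ps (k + 1)) * Fs k)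
    :
    ∀ k, x k ∈ {z ∈ s | f z + g z ≤ f (x 0) + g (x 0)} := by
  obtain ⟨hβ0, hβ1⟩ := hβ
  obtain ⟨hσ0, hσ1⟩ := hσ
  have key : ∀ k, x k ∈ s ∧ f (x k) + g (x k) ≤ f (x 0) + g (x 0)
      ∧ Fs k ≤ f (x 0) + g (x 0) := by
    intro k
    induction k with
    | zero => exact ⟨hx0, le_refl _, hF0.le⟩
    | succ k ih =>
      obtain ⟨hxk, hFk, hFsk⟩ := ih
      have hG : 0 ≤ FWgap f g s (x k) := by
        by_cases hb : BddAbove (Set.range fun v : s =>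
            (⟪gradient f (x k), x k - (v : E)⟫ + g (x k) - g (v : E)))
        · have h := le_ciSup hb (⟨x k, hxk⟩ : s)
          simp only [sub_self, inner_zero_right] at h
          simpa [FWgap] using h
        · unfold FWgap; rw [Real.iSup_of_not_bddAbove hb]
      have ht0 : 0 < β ^ ik k := pow_pos hβ0 _
      have ht1 : β ^ ik k ≤ 1 := pow_le_one₀ hβ0.le hβ1.le
      have hxs : x (k + 1) ∈ s := by
        rw [hxsucc k, hd k]
        have h := hs_cv hxk (hv k).1 (by linarith : (0:ℝ) ≤ 1 - β ^ ik k) ht0.le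
          (by ring)
        convert h using 1
        module
      have hnn : 0 ≤ σ * β ^ ik k * FWgap f g s (x k) :=
        mul_nonneg (mul_nonneg hσ0.le ht0.le) hG
      have hFx1 : f (x (k + 1)) + g (x (k + 1)) ≤ Fs k := by
        rw [hxsucc k]
        have := (hik k).1
        linarith
      obtain ⟨hp1, hp2⟩ := hps k
      have hpk0 : 0 ≤ ps (k + 1) := le_trans hp.1.le hp1
      refine ⟨hxs, le_trans hFx1 hFsk, ?_⟩
      rw [hFsucc k]
      nlinarith [hFx1, hFsk]
  intro k
  exact ⟨(key k).1, (key k).2.1⟩
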